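/- Let Y be a compact metric space, φ: Y → Y continuous with fixed points p ≠ q such that q has arbitrarily small neighbourhoods U with φ(U) ⊂ U, the fixed point set of φ is {p, q}, and every limit point of every orbit (φⁿ(z)) is a fixed point of φ. If additionally no orbit of a point z ≠ p converges to p, then φⁿ(z) → q for all z ≠ p. -/

import Mathlib

open Function Filter Topology

/-- Abstract dynamical argument: if the fixed point set is `{p, q}`, `q` is
attracting with arbitrarily small forward-invariant neighbourhoods, every
limit point of every orbit is a fixed point, and no orbit of a point `z ≠ p`
converges to `p`, then every orbit of a point `z ≠ p` converges to `q`. -/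
theorem stmt_19
    {Y : Type*} [MetricSpace Y] [CompactSpace Y]
    (φ : Y → Y) (hφ : Continuous φ)
    (p q : Y) (hpq : p ≠ q)
    (hfixp : φ p = p) (hfixq : φ q = q)
    (hattr : ∀ U ∈ 𝓝 q, ∃ V ∈ 𝓝 q, IsOpen V ∧ V ⊆ U ∧ Set.MapsTo φ V V)
    (hfix : ∀ z, φ z = z → z = p ∨ z = q)
    (hlim : ∀ z w : Y, MapClusterPt w atTop (fun n => φ^[n] z) → φ w = w)
    (hnotp : ∀ z, z ≠ p → ¬ Tendsto (fun n => φ^[n] z) atTop (𝓝 p)) :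
    ∀ z, z ≠ p → Tendsto (fun n => φ^[n] z) atTop (𝓝 q) := by
  intro z hz
  by_cases hc : MapClusterPt q atTop (fun n => φ^[n] z)
  · rw [tendsto_def]
    intro U hU
    obtain ⟨V, hVq, -, hVU, hmaps⟩ := hattr U hU
    obtain ⟨N, hN⟩ := (mapClusterPt_iff_frequently.mp hc V hVq).exists
    have key : ∀ n, φ^[N + n] z ∈ V := by
      intro n
      induction n with
      | zero => simpa using hN
      | succ k ih =>
        have : φ^[N + (k + 1)] z = φ (φ^[N + k] z) := by
          rw [← Function.iterate_succ_apply' φ (N + k) z, Nat.add_succ]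
        rw [this]; exact hmaps ih
    filter_upwards [eventually_ge_atTop N] with n hn
    obtain ⟨m, rfl⟩ := Nat.exists_eq_add_of_le hn
    exact hVU (key m)
  · exfalso
    refine hnotp z hz (tendsto_nhds_of_unique_mapClusterPt fun x hx => ?_)
    rcases hfix x (hlim z x hx) with h | h
    · exact h
    · exact absurd (h ▸ hx) hc
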